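/- If the input state to N parallel applications of U(θ) = diag(1, e^{2πiθ}) is Σ_{k=1}^N a_k |k̂⟩ with real coefficients a_k, a_0 = 0, followed by the inverse Fourier transform on the symmetric weight basis and the estimator l/(N+1), then the expected deviation W = E[1 − cos(2π(θ̂ − θ))] equals 1 − Σ_{k=2}^N a_{k−1} a_k, independent of θ. -/

import Mathlib

open Real Complex Finset

/-- Geometric/roots-of-unity sum. -/
lemma aux_geom (N : ℕ) (θ : ℝ) (m : ℤ) :
    ∑ l ∈ Finset.range (N+1),
        Complex.exp ((m : ℂ) * (2*π*((θ:ℂ) - l/(N+1))) * Complex.I) =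
      if ((N:ℤ)+1) ∣ m then (N+1 : ℂ) * Complex.exp ((m:ℂ) * (2*π*θ) * Complex.I) else 0 := by
  have hN1 : ((N:ℂ)+1) ≠ 0 := by
    exact Nat.cast_add_one_ne_zero N
  set ζ : ℂ := Complex.exp (-((m:ℂ) * (2*π) / (N+1)) * Complex.I) with hζ
  have hterm : ∀ l : ℕ, l ∈ Finset.range (N+1) →
      Complex.exp ((m : ℂ) * (2*π*((θ:ℂ) - l/(N+1))) * Complex.I)
        = Complex.exp ((m:ℂ) * (2*π*θ) * Complex.I) * ζ ^ l := by
    intro l _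
    rw [hζ, ← Complex.exp_nat_mul, ← Complex.exp_add]
    congr 1
    field_simp
    ring
  rw [Finset.sum_congr rfl hterm, ← Finset.mul_sum]
  have hzpow : ζ ^ (N+1) = 1 := by
    rw [hζ, ← Complex.exp_nat_mul]
    have : ((N:ℂ)+1) * (-((m:ℂ) * (2*π) / (N+1)) * Complex.I)
        = (-m : ℤ) * (2*π*Complex.I) := by
      push_cast
      field_simp
    rw [show ((N+1 : ℕ):ℂ) = (N:ℂ)+1 by push_cast; ring, this,
      Complex.exp_int_mul_two_pi_mul_I]
  by_cases hd : ((N:ℤ)+1) ∣ m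
  · obtain ⟨c, hc⟩ := id hd
    have hζ1 : ζ = 1 := by
      rw [hζ]
      have : -((m:ℂ) * (2*π) / (N+1)) * Complex.I = (-c : ℤ) * (2*π*Complex.I) := by
        have : (m : ℂ) = ((N:ℂ)+1) * c := by exact_mod_cast congrArg (Int.cast : ℤ → ℂ) hc
        rw [this]
        push_cast
        field_simp
      rw [this, Complex.exp_int_mul_two_pi_mul_I]
    rw [if_pos hd]
    simp [hζ1]
    ring
  · have hζne : ζ ≠ 1 := by
      intro h
      rw [hζ, Complex.exp_eq_one_iff] at h
      obtain ⟨n, hn⟩ := h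
      apply hd
      refine ⟨-n, ?_⟩
      have hπ : (π:ℂ) ≠ 0 := by exact_mod_cast Real.pi_ne_zero
      have hI : Complex.I ≠ 0 := Complex.I_ne_zero
      have h2πI : (2*(π:ℂ)*Complex.I) ≠ 0 := by
        simp [hπ, Complex.I_ne_zero]
      have key : (2*(π:ℂ)*Complex.I) * (m:ℂ)
          = (2*(π:ℂ)*Complex.I) * (((N:ℂ)+1) * ((-n : ℤ) : ℂ)) := by
        field_simp at hn
        push_cast
        linear_combination (-(2*(π:ℂ)*Complex.I)) * hn
      have h3 := mul_left_cancel₀ h2πI key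
      exact_mod_cast h3
    rw [geom_sum_eq hζne, hzpow]
    simp [hd]

lemma exp_helper (p q x y u : ℂ) :
    (p * Complex.exp x) * (q * Complex.exp y)
        * (1 - (Complex.exp u + Complex.exp (-u))/2)
      = p * q * (Complex.exp (x+y) - Complex.exp (x+y+u)/2 - Complex.exp (x+y-u)/2) := by
  simp only [Complex.exp_add, Complex.exp_sub, Complex.exp_neg]
  have h := Complex.exp_ne_zero u
  field_simp
  ring

theorem stmt_9 (N : ℕ) (hN : 1 ≤ N) (θ : ℝ) (a : ℕ → ℝ)
    (ha0 : a 0 = 0) (hnorm : ∑ k ∈ Finset.range (N + 1), a k ^ 2 = 1)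
    (Pr : ℕ → ℝ)
    (hPr : ∀ l, Pr l =
      ‖∑ k ∈ Finset.range (N + 1),
        (a k : ℂ) * Complex.exp (2 * π * k * ((θ : ℝ) - l / (N + 1)) * Complex.I)‖ ^ 2
        / (N + 1)) :
    ∑ l ∈ Finset.range (N + 1), Pr l * (1 - Real.cos (2 * π * (θ - l / (N + 1)))) =
      1 - ∑ k ∈ Finset.Icc 2 N, a (k - 1) * a k := by
  classical
  have hM0 : ((N:ℂ)+1) ≠ 0 := Nat.cast_add_one_ne_zero N
  set T : ℕ → ℂ := fun l => ∑ k ∈ Finset.range (N + 1),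
        (a k : ℂ) * Complex.exp (2 * π * k * ((θ : ℝ) - l / (N + 1)) * Complex.I) with hT
  set E : ℕ → ℤ → ℂ := fun l m =>
    Complex.exp ((m : ℂ) * (2*π*((θ:ℂ) - l/(N+1))) * Complex.I) with hE
  set F : ℤ → ℂ := fun m =>
    if ((N:ℤ)+1) ∣ m then (N+1 : ℂ) * Complex.exp ((m:ℂ) * (2*π*θ) * Complex.I) else 0 with hF
  -- conjugate of T
  have hconj : ∀ l : ℕ, (starRingEnd ℂ) (T l) = ∑ k ∈ Finset.range (N+1),
      (a k : ℂ) * Complex.exp (-(2 * π * k * ((θ:ℂ) - l/(N+1))) * Complex.I) := by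
    intro l
    rw [hT, map_sum]
    refine Finset.sum_congr rfl fun k _ => ?_
    rw [map_mul, Complex.conj_ofReal, ← Complex.exp_conj]
    congr 1
    simp only [map_mul, map_sub, map_div₀, map_add, map_natCast, map_ofNat, map_one,
      Complex.conj_I, Complex.conj_ofReal]
    ring
  -- step B: quadratic expansion
  have stepB : ∀ l : ℕ, T l * (starRingEnd ℂ) (T l)
        * ((1:ℂ) - ((Real.cos (2*π*(θ - l/(N+1))) : ℝ) : ℂ)) =
      ∑ j ∈ Finset.range (N+1), ∑ k ∈ Finset.range (N+1), (a j : ℂ) * (a k : ℂ) *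
        (E l ((j:ℤ)-k) - E l ((j:ℤ)-k+1)/2 - E l ((j:ℤ)-k-1)/2) := by
    intro l
    have hcos : ((Real.cos (2*π*(θ - l/(N+1))) : ℝ) : ℂ)
        = (Complex.exp (((2*π*(θ - l/(N+1)) : ℝ):ℂ)*Complex.I)
            + Complex.exp (-(((2*π*(θ - l/(N+1)) : ℝ):ℂ)*Complex.I)))/2 := by
      rw [Complex.ofReal_cos, Complex.cos]
      ring_nf
    rw [hcos, hconj l, hT]
    rw [Finset.sum_mul_sum]
    rw [Finset.sum_mul]
    refine Finset.sum_congr rfl fun j _ => ?_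
    rw [Finset.sum_mul]
    refine Finset.sum_congr rfl fun k _ => ?_
    rw [exp_helper]
    have e1 : 2 * (π:ℂ) * j * ((θ : ℝ) - l / (N + 1)) * Complex.I
        + -(2 * π * k * ((θ:ℂ) - l/(N+1))) * Complex.I
        = (((j:ℤ)-k : ℤ):ℂ) * (2*π*((θ:ℂ) - l/(N+1))) * Complex.I := by
      push_cast; ring
    have e2 : (((j:ℤ)-k : ℤ):ℂ) * (2*π*((θ:ℂ) - l/(N+1))) * Complex.I
        + ((2*π*(θ - l/(N+1)) : ℝ):ℂ)*Complex.I
        = (((j:ℤ)-k+1 : ℤ):ℂ) * (2*π*((θ:ℂ) - l/(N+1))) * Complex.I := by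
      push_cast; ring
    have e3 : (((j:ℤ)-k : ℤ):ℂ) * (2*π*((θ:ℂ) - l/(N+1))) * Complex.I
        - ((2*π*(θ - l/(N+1)) : ℝ):ℂ)*Complex.I
        = (((j:ℤ)-k-1 : ℤ):ℂ) * (2*π*((θ:ℂ) - l/(N+1))) * Complex.I := by
      push_cast; ring
    rw [e1, e2, e3]
  -- sum over l of E equals F
  have hEF : ∀ m : ℤ, ∑ l ∈ Finset.range (N+1), E l m = F m := by
    intro m
    rw [hE, hF]
    exact aux_geom N θ m
  -- step A: expressing the real sum as re of a complex sum
  have stepA : ∀ l : ℕ, Pr l * (1 - Real.cos (2 * π * (θ - l / (N + 1))))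
      = ((T l * (starRingEnd ℂ) (T l)
          * ((1:ℂ) - ((Real.cos (2*π*(θ - l/(N+1))) : ℝ) : ℂ)) / ((N:ℂ)+1))).re := by
    intro l
    rw [hPr l]
    have habs : T l * (starRingEnd ℂ) (T l) = ((‖T l‖ ^ 2 : ℝ) : ℂ) := by
      rw [Complex.mul_conj, Complex.sq_norm]
    rw [habs]
    have : ((‖T l‖ ^ 2 : ℝ) : ℂ)
          * ((1:ℂ) - ((Real.cos (2*π*(θ - l/(N+1))) : ℝ) : ℂ)) / ((N:ℂ)+1)
        = (((‖T l‖ ^ 2) * (1 - Real.cos (2*π*(θ - l/(N+1)))) / (N+1) : ℝ) : ℂ) := by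
      push_cast; ring
    rw [this, Complex.ofReal_re, hT]
    ring
  -- pointwise evaluation of F-combination
  have stepD : ∀ j ∈ Finset.range (N+1), ∀ k ∈ Finset.range (N+1),
      (a j : ℂ) * (a k : ℂ) * (F ((j:ℤ)-k) - F ((j:ℤ)-k+1)/2 - F ((j:ℤ)-k-1)/2)
        = ((N:ℂ)+1) * (if j = k then (a j : ℂ) * a k else 0)
            - (((N:ℂ)+1)/2) * (if k = j+1 then (a j : ℂ) * a k else 0)
            - (((N:ℂ)+1)/2) * (if j = k+1 then (a j : ℂ) * a k else 0) := by
    intro j hj k hk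
    rw [Finset.mem_range] at hj hk
    by_cases h0 : (a j : ℂ) * (a k : ℂ) = 0
    · rw [h0]
      split_ifs <;> simp
    · have haj : a j ≠ 0 := by
        intro h; apply h0; rw [h]; simp
      have hak : a k ≠ 0 := by
        intro h; apply h0; rw [h]; simp
      have hj0 : j ≠ 0 := fun h => haj (h ▸ ha0)
      have hk0 : k ≠ 0 := fun h => hak (h ▸ ha0)
      have e1 : F ((j:ℤ)-k) = if j = k then ((N:ℂ)+1) else 0 := by
        by_cases h : j = k
        · subst h
          simp [hF]
        · have hnd : ¬ (((N:ℤ)+1) ∣ ((j:ℤ)-k)) := by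
            intro hd
            have := Int.eq_zero_of_dvd_of_natAbs_lt_natAbs hd (by omega)
            omega
          simp only [hF, if_neg hnd, if_neg h]
      have e2 : F ((j:ℤ)-k+1) = if k = j+1 then ((N:ℂ)+1) else 0 := by
        by_cases h : k = j+1
        · subst h
          have hm : (j:ℤ) - (↑(j+1):ℤ) + 1 = 0 := by push_cast; ring
          simp [hF, hm]
        · have hnd : ¬ (((N:ℤ)+1) ∣ ((j:ℤ)-k+1)) := by
            intro hd
            have := Int.eq_zero_of_dvd_of_natAbs_lt_natAbs hd (by omega)
            omega
          simp only [hF, if_neg hnd, if_neg h]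
      have e3 : F ((j:ℤ)-k-1) = if j = k+1 then ((N:ℂ)+1) else 0 := by
        by_cases h : j = k+1
        · subst h
          have hm : (↑(k+1):ℤ) - (k:ℤ) - 1 = 0 := by push_cast; ring
          simp [hF, hm]
        · have hnd : ¬ (((N:ℤ)+1) ∣ ((j:ℤ)-k-1)) := by
            intro hd
            have := Int.eq_zero_of_dvd_of_natAbs_lt_natAbs hd (by omega)
            omega
          simp only [hF, if_neg hnd, if_neg h]
      rw [e1, e2, e3]
      split_ifs <;> ring
  -- the neighbor sum
  set s : ℝ := ∑ j ∈ Finset.range N, a j * a (j+1) with hs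
  -- total complex sum
  have total : ∑ l ∈ Finset.range (N+1),
      T l * (starRingEnd ℂ) (T l)
        * ((1:ℂ) - ((Real.cos (2*π*(θ - l/(N+1))) : ℝ) : ℂ))
      = ((N:ℂ)+1) * (1 - (s:ℂ)) := by
    calc ∑ l ∈ Finset.range (N+1), T l * (starRingEnd ℂ) (T l)
          * ((1:ℂ) - ((Real.cos (2*π*(θ - l/(N+1))) : ℝ) : ℂ))
        = ∑ l ∈ Finset.range (N+1), ∑ j ∈ Finset.range (N+1), ∑ k ∈ Finset.range (N+1),
            (a j : ℂ) * (a k : ℂ) *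
              (E l ((j:ℤ)-k) - E l ((j:ℤ)-k+1)/2 - E l ((j:ℤ)-k-1)/2) := by
          exact Finset.sum_congr rfl fun l _ => stepB l
      _ = ∑ j ∈ Finset.range (N+1), ∑ k ∈ Finset.range (N+1),
            (a j : ℂ) * (a k : ℂ) *
              (F ((j:ℤ)-k) - F ((j:ℤ)-k+1)/2 - F ((j:ℤ)-k-1)/2) := by
          rw [Finset.sum_comm]
          refine Finset.sum_congr rfl fun j _ => ?_
          rw [Finset.sum_comm]
          refine Finset.sum_congr rfl fun k _ => ?_
          rw [← Finset.mul_sum]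
          congr 1
          rw [Finset.sum_sub_distrib, Finset.sum_sub_distrib, ← Finset.sum_div, ← Finset.sum_div,
            hEF, hEF, hEF]
      _ = ((N:ℂ)+1) * (1 - (s:ℂ)) := by
          rw [Finset.sum_congr rfl fun j hj => Finset.sum_congr rfl fun k hk => stepD j hj k hk]
          simp only [Finset.sum_sub_distrib, ← Finset.mul_sum]
          have t1 : ∑ j ∈ Finset.range (N+1), ∑ k ∈ Finset.range (N+1),
              (if j = k then (a j : ℂ) * a k else 0) = 1 := by
            have : ∀ j ∈ Finset.range (N+1), ∑ k ∈ Finset.range (N+1),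
                (if j = k then (a j : ℂ) * a k else 0) = ((a j : ℂ))^2 := by
              intro j hj
              rw [Finset.sum_ite_eq _ j (fun k => (a j : ℂ) * a k), if_pos hj]
              ring
            rw [Finset.sum_congr rfl this]
            rw [← Complex.ofReal_one, ← hnorm]
            push_cast
            rfl
          have t2 : ∑ j ∈ Finset.range (N+1), ∑ k ∈ Finset.range (N+1),
              (if k = j+1 then (a j : ℂ) * a k else 0) = (s:ℂ) := by
            have : ∀ j ∈ Finset.range (N+1), ∑ k ∈ Finset.range (N+1),
                (if k = j+1 then (a j : ℂ) * a k else 0)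
                  = (if j < N then (a j : ℂ) * a (j+1) else 0) := by
              intro j hj
              rw [Finset.sum_ite_eq' _ (j+1) (fun k => (a j : ℂ) * a k)]
              simp only [Finset.mem_range]
              congr 1
              simp only [eq_iff_iff]
              omega
            rw [Finset.sum_congr rfl this, ← Finset.sum_filter,
              show Finset.filter (fun j => j < N) (Finset.range (N+1)) = Finset.range N by
                ext x; simp; omega, hs]
            push_cast
            rfl
          have t3 : ∑ j ∈ Finset.range (N+1), ∑ k ∈ Finset.range (N+1),
              (if j = k+1 then (a j : ℂ) * a k else 0) = (s:ℂ) := by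
            rw [Finset.sum_comm]
            have : ∀ k ∈ Finset.range (N+1), ∑ j ∈ Finset.range (N+1),
                (if j = k+1 then (a j : ℂ) * a k else 0)
                  = (if k < N then (a k : ℂ) * a (k+1) else 0) := by
              intro k hk
              rw [Finset.sum_ite_eq' _ (k+1) (fun j => (a j : ℂ) * a k)]
              simp only [Finset.mem_range]
              by_cases h : k < N
              · rw [if_pos (by omega), if_pos h]
                ring
              · rw [if_neg (by omega), if_neg h]
            rw [Finset.sum_congr rfl this, ← Finset.sum_filter,
              show Finset.filter (fun k => k < N) (Finset.range (N+1)) = Finset.range N by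
                ext x; simp; omega, hs]
            push_cast
            rfl
          rw [t1, t2, t3]
          ring
  -- assemble
  have lhs_eq : ∑ l ∈ Finset.range (N + 1), Pr l * (1 - Real.cos (2 * π * (θ - l / (N + 1))))
      = 1 - s := by
    rw [Finset.sum_congr rfl fun l _ => stepA l, ← Complex.re_sum, ← Finset.sum_div, total]
    have h : ((N:ℂ)+1) * (1 - (s:ℂ)) / ((N:ℂ)+1) = 1 - (s:ℂ) := by
      field_simp
    rw [h]
    simp
  rw [lhs_eq]
  congr 1
  -- s equals the Icc sum
  have hIcc : ∑ k ∈ Finset.Icc 2 N, a (k - 1) * a k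
      = ∑ j ∈ Finset.Icc 1 (N-1), a j * a (j+1) := by
    have hmap : Finset.Icc 2 N = Finset.map (addLeftEmbedding 1) (Finset.Icc 1 (N-1)) := by
      rw [Finset.map_add_left_Icc]
      congr 1
      omega
    rw [hmap, Finset.sum_map]
    refine Finset.sum_congr rfl fun j hj => ?_
    simp only [addLeftEmbedding_apply]
    rw [show 1 + j - 1 = j by omega, show 1 + j = j + 1 by omega]
  rw [hIcc, hs]
  have herase : Finset.Icc 1 (N-1) = (Finset.range N).erase 0 := by
    ext x; simp [Finset.mem_erase, Finset.mem_range]; omega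
  rw [herase]
  rw [Finset.sum_erase_eq_sub (by simp [Finset.mem_range]; omega), ha0]
  ring
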